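/- (Monotone approach to the limit interface.) Let δₙ = τ2^{−n} and let φ_t^{δ,−}, φ_t^{δ,+} be the delta interface evolutions from a fixed initial φ (1-Lipschitz, ≥ |r|, = |r| outside a compact). Then for every t in the dyadic grid and every n: φ_t^{δₙ,−} ≤ φ_t^{δ_{n+1},−} ≤ φ_t^{δₙ,+}. Consequently φ_t^{δₙ,−}(r) converges pointwise as n → ∞, and since all φ_t^{δ,±} are 1-Lipschitz in r, the convergence is uniform and the limit φ_t is 1-Lipschitz. -/

import Mathlib

open MeasureTheory

/-- The Gaussian heat kernel. -/
noncomputable def gaussK (t r r' : ℝ) : ℝ :=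
  Real.exp (-(r - r') ^ 2 / (2 * t)) / Real.sqrt (2 * Real.pi * t)

/-- The heat semigroup applied to an interface. -/
noncomputable def heatEvol (t : ℝ) (f : ℝ → ℝ) (r : ℝ) : ℝ :=
  ∫ r', gaussK t r r' * f r'

/-- The delta⁻ interface evolution sampled at times `kδ`. -/
noncomputable def deltaMinus (j δ : ℝ) (φ : ℝ → ℝ) : ℕ → ℝ → ℝ
  | 0 => φ
  | k + 1 => fun r =>
      max (heatEvol δ (deltaMinus j δ φ k) r) (|r| + ((k : ℝ) + 1) * j * δ)

/-- The delta⁺ interface evolution sampled at times `kδ`. -/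
noncomputable def deltaPlus (j δ : ℝ) (φ : ℝ → ℝ) : ℕ → ℝ → ℝ
  | 0 => fun r => max (φ r) (|r| + j * δ)
  | k + 1 => fun r =>
      max (heatEvol δ (deltaPlus j δ φ k) r) (|r| + ((k : ℝ) + 2) * j * δ)

/-! ### Auxiliary analytic lemmas on the Gaussian kernel -/

section Gauss
open Real

lemma gaussK_nonneg (t r r' : ℝ) : 0 ≤ gaussK t r r' :=
  div_nonneg (Real.exp_pos _).le (Real.sqrt_nonneg _)

lemma gaussK_eq (t r r' : ℝ) :
    gaussK t r r' = Real.sqrt (2 * Real.pi * t)⁻¹ * Real.exp (-(2*t)⁻¹ * (r' - r) ^ 2) := by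
  rw [gaussK, div_eq_mul_inv, mul_comm, Real.sqrt_inv]
  congr 2
  ring_nf

lemma gaussK_cont (t r : ℝ) : Continuous (fun r' => gaussK t r r') := by
  unfold gaussK
  fun_prop

lemma integrable_gauss_abs {b : ℝ} (hb : 0 < b) :
    Integrable (fun x : ℝ => |x| * Real.exp (-b * x ^ 2)) := by
  have h := (integrable_mul_exp_neg_mul_sq hb).abs
  simp only [abs_mul, abs_of_pos (Real.exp_pos _)] at h
  exact h

lemma lip_bound {f : ℝ → ℝ} (hf : LipschitzWith 1 f) (r u : ℝ) : |f u| ≤ |f r| + |u - r| := by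
  have h1 := abs_sub_abs_le_abs_sub (f u) (f r)
  have h2 := hf.dist_le_mul u r
  simp only [Real.dist_eq, NNReal.coe_one, one_mul] at h2
  linarith

lemma integrable_kern_aux {t : ℝ} (ht : 0 < t) (C r : ℝ) :
    Integrable (fun u => gaussK t r u * (C + |u - r|)) := by
  have hb : 0 < (2*t)⁻¹ := by positivity
  have h1 : Integrable (fun x : ℝ => (C + |x|) * Real.exp (-(2*t)⁻¹ * x ^ 2)) := by
    have h := ((integrable_exp_neg_mul_sq hb).const_mul C).add (integrable_gauss_abs hb)
    refine h.congr (Filter.Eventually.of_forall fun x => ?_)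
    simp only [Pi.add_apply]; ring
  have h2 := (h1.comp_sub_right r).const_mul (Real.sqrt (2 * Real.pi * t)⁻¹)
  refine h2.congr (Filter.Eventually.of_forall fun u => ?_)
  simp only []; rw [gaussK_eq]; ring

lemma integrable_kern {t : ℝ} (ht : 0 < t) {f : ℝ → ℝ} (hf : LipschitzWith 1 f) (r : ℝ) :
    Integrable (fun u => gaussK t r u * f u) := by
  have hcont : Continuous (fun u => gaussK t r u * f u) :=
    (gaussK_cont t r).mul hf.continuous
  refine (integrable_kern_aux ht (|f r|) r).mono' hcont.aestronglyMeasurable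
    (Filter.Eventually.of_forall fun u => ?_)
  rw [Real.norm_eq_abs, abs_mul, abs_of_nonneg (gaussK_nonneg t r u)]
  exact mul_le_mul_of_nonneg_left (lip_bound hf r u) (gaussK_nonneg t r u)

lemma lip_shift {f : ℝ → ℝ} (hf : LipschitzWith 1 f) (r : ℝ) :
    LipschitzWith 1 (fun u => f (r + u)) := by
  intro x y
  simpa using hf (r + x) (r + y)

lemma integrable_gaussK {t : ℝ} (ht : 0 < t) (r : ℝ) : Integrable (gaussK t r) := by
  have hl : LipschitzWith 1 (fun _ : ℝ => (1:ℝ)) := (LipschitzWith.const' (1 : ℝ)).weaken le_rfl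
  have h := integrable_kern ht hl r
  simpa using h

lemma gaussK_shift (t r x : ℝ) : gaussK t r (x + r) = gaussK t 0 x := by
  unfold gaussK; ring_nf

lemma heat_repr (t : ℝ) (f : ℝ → ℝ) (r : ℝ) :
    heatEvol t f r = ∫ x, gaussK t 0 x * f (r + x) := by
  rw [heatEvol, ← integral_add_right_eq_self (fun u => gaussK t r u * f u) r]
  congr 1; funext x
  rw [gaussK_shift, add_comm]

lemma gauss_norm {t : ℝ} (ht : 0 < t) : ∫ x, gaussK t 0 x = 1 := by
  have hb : 0 < (2*t)⁻¹ := by positivity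
  have h : ∫ x, gaussK t 0 x
      = Real.sqrt (2 * Real.pi * t)⁻¹ * ∫ x, Real.exp (-(2*t)⁻¹ * x ^ 2) := by
    rw [← integral_const_mul]
    congr 1; funext x; rw [gaussK_eq]; ring_nf
  rw [h, integral_gaussian, Real.sqrt_inv]
  have h2 : Real.pi / (2*t)⁻¹ = 2 * Real.pi * t := by field_simp
  rw [h2, inv_mul_cancel₀]
  positivity

lemma integrable_gauss_shift {t : ℝ} (ht : 0 < t) {f : ℝ → ℝ} (hf : LipschitzWith 1 f) (r : ℝ) :
    Integrable (fun x => gaussK t 0 x * f (r + x)) :=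
  integrable_kern ht (lip_shift hf r) 0

lemma heat_mono {t : ℝ} (ht : 0 < t) {f g : ℝ → ℝ} (hf : LipschitzWith 1 f)
    (hg : LipschitzWith 1 g) (hfg : ∀ r, f r ≤ g r) (r : ℝ) :
    heatEvol t f r ≤ heatEvol t g r := by
  refine integral_mono (integrable_kern ht hf r) (integrable_kern ht hg r) fun u => ?_
  exact mul_le_mul_of_nonneg_left (hfg u) (gaussK_nonneg t r u)

lemma heat_lip {t : ℝ} (ht : 0 < t) {f : ℝ → ℝ} (hf : LipschitzWith 1 f) :
    LipschitzWith 1 (heatEvol t f) := by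
  refine LipschitzWith.of_dist_le_mul fun r s => ?_
  rw [NNReal.coe_one, one_mul, Real.dist_eq, Real.dist_eq, heat_repr, heat_repr]
  rw [← integral_sub (integrable_gauss_shift ht hf r) (integrable_gauss_shift ht hf s)]
  have h1 : |∫ x, (gaussK t 0 x * f (r + x) - gaussK t 0 x * f (s + x))|
      ≤ ∫ x, |gaussK t 0 x * f (r + x) - gaussK t 0 x * f (s + x)| := by
    simpa [Real.norm_eq_abs] using
      norm_integral_le_integral_norm (fun x => gaussK t 0 x * f (r + x) - gaussK t 0 x * f (s + x))
  refine h1.trans ?_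
  have h2 : ∀ x, |gaussK t 0 x * f (r + x) - gaussK t 0 x * f (s + x)|
      ≤ gaussK t 0 x * |r - s| := by
    intro x
    rw [← mul_sub, abs_mul, abs_of_nonneg (gaussK_nonneg t 0 x)]
    refine mul_le_mul_of_nonneg_left ?_ (gaussK_nonneg t 0 x)
    have := hf.dist_le_mul (r + x) (s + x)
    simpa [Real.dist_eq] using this
  calc ∫ x, |gaussK t 0 x * f (r + x) - gaussK t 0 x * f (s + x)|
      ≤ ∫ x, gaussK t 0 x * |r - s| := by
        refine integral_mono ?_ ((integrable_gaussK ht 0).mul_const _) h2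
        exact ((integrable_gauss_shift ht hf r).sub (integrable_gauss_shift ht hf s)).abs
    _ = |r - s| := by rw [integral_mul_const, gauss_norm ht, one_mul]

lemma heat_add_const {t : ℝ} (ht : 0 < t) {f : ℝ → ℝ} (hf : LipschitzWith 1 f) (c r : ℝ) :
    heatEvol t (fun x => f x + c) r = heatEvol t f r + c := by
  have h : (fun u => gaussK t r u * (f u + c)) = fun u => gaussK t r u * f u + gaussK t r u * c := by
    funext u; ring
  have hnorm : ∫ u, gaussK t r u = 1 := by
    rw [← integral_add_right_eq_self (gaussK t r) r]
    simp only [gaussK_shift]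
    exact gauss_norm ht
  rw [heatEvol, h, integral_add (integrable_kern ht hf r) ((integrable_gaussK ht r).mul_const c),
    integral_mul_const, hnorm, one_mul, heatEvol]

lemma gaussK_even (t x : ℝ) : gaussK t 0 (-x) = gaussK t 0 x := by unfold gaussK; ring_nf

lemma gauss_odd {t : ℝ} (ht : 0 < t) : ∫ x, gaussK t 0 x * x = 0 := by
  have h := integral_neg_eq_self (fun x => gaussK t 0 x * x) volume
  have h2 : (∫ x, gaussK t 0 (-x) * (-x)) = - ∫ x, gaussK t 0 x * x := by
    rw [← integral_neg]
    congr 1; funext x; rw [gaussK_even]; ring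
  rw [h2] at h
  linarith

lemma heat_abs_ge {t : ℝ} (ht : 0 < t) (r : ℝ) :
    |r| ≤ heatEvol t (fun x => |x|) r := by
  have habs : LipschitzWith 1 (fun x : ℝ => |x|) := by
    exact LipschitzWith.of_dist_le_mul fun x y => by simpa [Real.dist_eq] using abs_abs_sub_abs_le_abs_sub x y
  have hid : LipschitzWith 1 (fun x : ℝ => r + x) := by
    intro a b; simpa using le_refl (edist a b)
  have hint : Integrable (fun x => gaussK t 0 x * (r + x)) :=
    integrable_kern ht hid 0
  have hmean : (∫ x, gaussK t 0 x * (r + x)) = r := by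
    have hsplit : (fun x => gaussK t 0 x * (r + x))
        = fun x => gaussK t 0 x * r + gaussK t 0 x * x := by funext x; ring
    have hid2 : Integrable (fun x => gaussK t 0 x * x) := integrable_kern ht LipschitzWith.id 0
    rw [hsplit, integral_add ((integrable_gaussK ht 0).mul_const r) hid2,
      integral_mul_const, gauss_norm ht, gauss_odd ht, one_mul, add_zero]
  rw [heat_repr]
  calc |r| = |∫ x, gaussK t 0 x * (r + x)| := by rw [hmean]
    _ ≤ ∫ x, |gaussK t 0 x| * |r + x| := by
        have := norm_integral_le_integral_norm (μ := volume)
          (f := fun x => gaussK t 0 x * (r + x))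
        simpa [Real.norm_eq_abs, abs_mul] using this
    _ = ∫ x, gaussK t 0 x * |r + x| := by
        congr 1; funext x
        rw [abs_of_nonneg (gaussK_nonneg t 0 x)]

lemma gauss_conv {s t : ℝ} (hs : 0 < s) (ht : 0 < t) (z : ℝ) :
    ∫ u, gaussK s 0 u * gaussK t u z = gaussK (s + t) 0 z := by
  set A : ℝ := (2*s)⁻¹ with hA
  set B : ℝ := (2*t)⁻¹ with hB
  have hApos : 0 < A := by positivity
  have hBpos : 0 < B := by positivity
  have hABpos : 0 < A + B := by positivity
  set c : ℝ := B * z / (A + B) with hc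
  have key : ∀ u : ℝ, gaussK s 0 u * gaussK t u z
      = (Real.sqrt (2 * Real.pi * s)⁻¹ * Real.sqrt (2 * Real.pi * t)⁻¹
          * Real.exp (-(2*(s+t))⁻¹ * z ^ 2)) * Real.exp (-(A + B) * (u - c) ^ 2) := by
    intro u
    have hexp : Real.exp (-(2*s)⁻¹ * (u - 0) ^ 2) * Real.exp (-(2*t)⁻¹ * (z - u) ^ 2)
        = Real.exp (-(2*(s+t))⁻¹ * z ^ 2) * Real.exp (-(A + B) * (u - c) ^ 2) := by
      rw [← Real.exp_add, ← Real.exp_add]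
      congr 1
      rw [hc, hA, hB]
      field_simp
      ring
    rw [gaussK_eq s 0 u, gaussK_eq t u z, mul_mul_mul_comm, hexp]
    ring
  calc ∫ u, gaussK s 0 u * gaussK t u z
      = (Real.sqrt (2 * Real.pi * s)⁻¹ * Real.sqrt (2 * Real.pi * t)⁻¹
          * Real.exp (-(2*(s+t))⁻¹ * z ^ 2)) * ∫ u, Real.exp (-(A + B) * (u - c) ^ 2) := by
        rw [← integral_const_mul]
        exact integral_congr_ae (Filter.Eventually.of_forall fun u => key u)
    _ = gaussK (s + t) 0 z := by
        have htr : (∫ u : ℝ, Real.exp (-(A + B) * (u - c) ^ 2))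
            = ∫ u : ℝ, Real.exp (-(A + B) * u ^ 2) :=
          integral_sub_right_eq_self (fun u => Real.exp (-(A + B) * u ^ 2)) c
        rw [htr, integral_gaussian, gaussK_eq]
        have harg : Real.sqrt (2 * Real.pi * s)⁻¹ * Real.sqrt (2 * Real.pi * t)⁻¹
            * Real.sqrt (Real.pi / (A + B)) = Real.sqrt (2 * Real.pi * (s+t))⁻¹ := by
          rw [← Real.sqrt_mul (by positivity), ← Real.sqrt_mul (by positivity)]
          congr 1
          rw [hA, hB]
          field_simp
          ring
        rw [show Real.sqrt (2 * Real.pi * s)⁻¹ * Real.sqrt (2 * Real.pi * t)⁻¹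
            * Real.exp (-(2*(s+t))⁻¹ * z ^ 2) * Real.sqrt (Real.pi / (A + B))
            = Real.sqrt (2 * Real.pi * s)⁻¹ * Real.sqrt (2 * Real.pi * t)⁻¹
            * Real.sqrt (Real.pi / (A + B)) * Real.exp (-(2*(s+t))⁻¹ * z ^ 2) by ring, harg]
        norm_num

lemma lip_abs {f : ℝ → ℝ} (hf : LipschitzWith 1 f) : LipschitzWith 1 (fun x => |f x|) := by
  have habs : LipschitzWith 1 (fun x : ℝ => |x|) := by
    exact LipschitzWith.of_dist_le_mul fun x y => by simpa [Real.dist_eq] using abs_abs_sub_abs_le_abs_sub x y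
  simpa [Function.comp_def] using habs.comp hf

lemma gaussK_cont2 (t : ℝ) : Continuous (fun p : ℝ × ℝ => gaussK t p.1 p.2) := by
  unfold gaussK; fun_prop

lemma gaussK_shift2 (t u r r' : ℝ) : gaussK t (u + r) r' = gaussK t u (r' - r) := by
  unfold gaussK; ring_nf

lemma gaussK_diff (t r r' : ℝ) : gaussK t r r' = gaussK t 0 (r' - r) := by
  unfold gaussK; ring_nf

lemma kern_conv {s t : ℝ} (hs : 0 < s) (ht : 0 < t) (r r' : ℝ) :
    ∫ u, gaussK s r u * gaussK t u r' = gaussK (s + t) r r' := by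
  rw [← integral_add_right_eq_self (fun u => gaussK s r u * gaussK t u r') r]
  simp only [gaussK_shift2]
  have h : ∀ u : ℝ, gaussK s r (u + r) = gaussK s 0 u := by
    intro u; rw [gaussK_diff]; norm_num
  simp only [h]
  rw [gauss_conv hs ht (r' - r), ← gaussK_diff]

lemma heat_semigroup {s t : ℝ} (hs : 0 < s) (ht : 0 < t) {f : ℝ → ℝ}
    (hf : LipschitzWith 1 f) (r : ℝ) :
    heatEvol s (heatEvol t f) r = heatEvol (s + t) f r := by
  have habs : LipschitzWith 1 (fun x => |f x|) := lip_abs hf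
  set g : ℝ → ℝ := heatEvol t (fun x => |f x|) with hg
  have hglip : LipschitzWith 1 g := heat_lip ht habs
  set h : ℝ × ℝ → ℝ := fun p => gaussK s r p.1 * (gaussK t p.1 p.2 * f p.2) with hh
  have hfc : Continuous f := hf.continuous
  have hcont : Continuous h := by
    rw [hh]
    unfold gaussK
    fun_prop
  have hint : Integrable h ((volume : Measure ℝ).prod volume) := by
    rw [integrable_prod_iff hcont.aestronglyMeasurable]
    constructor
    · refine Filter.Eventually.of_forall fun u => ?_
      have := (integrable_kern ht hf u).const_mul (gaussK s r u)
      exact this.congr (Filter.Eventually.of_forall fun y => rfl)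
    · have heq : ∀ u : ℝ, (∫ r'', ‖h (u, r'')‖) = gaussK s r u * g u := by
        intro u
        rw [hg, heatEvol, ← integral_const_mul]
        congr 1; funext r''
        rw [hh]
        simp only [Real.norm_eq_abs, abs_mul]
        rw [abs_of_nonneg (gaussK_nonneg s r u), abs_of_nonneg (gaussK_nonneg t u r'')]
      refine ((integrable_kern hs hglip r).congr (Filter.Eventually.of_forall fun u => ?_))
      simp only []
      rw [← heq u]
  have hswap : (∫ u, ∫ r'', h (u, r'')) = ∫ r'', ∫ u, h (u, r'') :=
    integral_integral_swap hint
  calc heatEvol s (heatEvol t f) r = ∫ u, ∫ r'', h (u, r'') := by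
        rw [heatEvol]
        congr 1; funext u
        rw [heatEvol, ← integral_const_mul]
    _ = ∫ r'', ∫ u, h (u, r'') := hswap
    _ = ∫ r'', gaussK (s + t) r r'' * f r'' := by
        congr 1; funext r''
        have : (∫ u, h (u, r'')) = (∫ u, gaussK s r u * gaussK t u r'') * f r'' := by
          rw [← integral_mul_const]
          congr 1; funext u; rw [hh]; ring
        rw [this, kern_conv hs ht]
    _ = heatEvol (s + t) f r := rfl

end Gauss

/-! ### Lemmas on the delta evolutions -/

section Delta

lemma lip_add_const {f : ℝ → ℝ} (hf : LipschitzWith 1 f) (c : ℝ) :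
    LipschitzWith 1 (fun x => f x + c) := by
  refine LipschitzWith.of_dist_le_mul fun x y => ?_
  simpa [Real.dist_eq, add_sub_add_right_eq_sub] using hf.dist_le_mul x y

lemma cone_lip (c : ℝ) : LipschitzWith 1 (fun r : ℝ => |r| + c) := by
  have habs : LipschitzWith 1 (fun x : ℝ => |x|) := by
    exact LipschitzWith.of_dist_le_mul fun x y => by simpa [Real.dist_eq] using abs_abs_sub_abs_le_abs_sub x y
  exact lip_add_const habs c

variable {j δ : ℝ} {φ : ℝ → ℝ}

lemma dm_succ (k : ℕ) (r : ℝ) : deltaMinus j δ φ (k+1) r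
    = max (heatEvol δ (deltaMinus j δ φ k) r) (|r| + ((k:ℝ)+1)*j*δ) := rfl

lemma dp_succ (k : ℕ) (r : ℝ) : deltaPlus j δ φ (k+1) r
    = max (heatEvol δ (deltaPlus j δ φ k) r) (|r| + ((k:ℝ)+2)*j*δ) := rfl

lemma dm_lip (hδ : 0 < δ) (hlip : LipschitzWith 1 φ) :
    ∀ k, LipschitzWith 1 (deltaMinus j δ φ k)
  | 0 => hlip
  | k + 1 => by
      have ih := dm_lip hδ hlip k
      have := (heat_lip hδ ih).max (cone_lip (((k : ℝ) + 1) * j * δ))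
      simpa [deltaMinus] using this

lemma dp_lip (hδ : 0 < δ) (hlip : LipschitzWith 1 φ) :
    ∀ k, LipschitzWith 1 (deltaPlus j δ φ k)
  | 0 => by
      have := hlip.max (cone_lip (j * δ))
      simpa [deltaPlus] using this
  | k + 1 => by
      have ih := dp_lip hδ hlip k
      have := (heat_lip hδ ih).max (cone_lip (((k : ℝ) + 2) * j * δ))
      simpa [deltaPlus] using this

lemma dp_ge_cone : ∀ (k : ℕ) (r : ℝ), |r| + ((k : ℝ) + 1) * j * δ ≤ deltaPlus j δ φ k r
  | 0, r => by
      simpa [deltaPlus] using le_max_right (φ r) (|r| + 1 * j * δ)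
  | k + 1, r => by
      have : ((k : ℝ) + 1 + 1) * j * δ = ((k : ℝ) + 2) * j * δ := by ring
      simp only [deltaPlus, Nat.cast_add, Nat.cast_one, this]
      exact le_max_right _ _

lemma cone_le_heat (hδ : 0 < δ) (a r : ℝ) :
    |r| + a ≤ heatEvol δ (fun x => |x| + a) r := by
  have habs : LipschitzWith 1 (fun x : ℝ => |x|) := by
    exact LipschitzWith.of_dist_le_mul fun x y => by simpa [Real.dist_eq] using abs_abs_sub_abs_le_abs_sub x y
  rw [heat_add_const hδ habs a r]
  have := heat_abs_ge hδ r
  linarith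

lemma dp_le_dm_add (hj : 0 < j) (hδ : 0 < δ) (hlip : LipschitzWith 1 φ)
    (hge : ∀ r, |r| ≤ φ r) :
    ∀ (k : ℕ) (r : ℝ), deltaPlus j δ φ k r ≤ deltaMinus j δ φ k r + j * δ
  | 0, r => by
      have h1 : φ r ≤ φ r + j * δ := by nlinarith
      have h2 : |r| + j * δ ≤ φ r + j * δ := by linarith [hge r]
      simpa [deltaPlus, deltaMinus] using max_le h1 h2
  | k + 1, r => by
      have ih := dp_le_dm_add hj hδ hlip hge k
      simp only [deltaPlus, deltaMinus]
      refine max_le ?_ ?_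
      · have h1 : ∀ x, deltaPlus j δ φ k x ≤ deltaMinus j δ φ k x + j * δ := ih
        have h2 : heatEvol δ (deltaPlus j δ φ k) r
            ≤ heatEvol δ (fun x => deltaMinus j δ φ k x + j * δ) r :=
          heat_mono hδ (dp_lip hδ hlip k) (lip_add_const (dm_lip hδ hlip k) _) h1 r
        rw [heat_add_const hδ (dm_lip hδ hlip k) (j * δ) r] at h2
        exact h2.trans (by
          have := le_max_left (heatEvol δ (deltaMinus j δ φ k) r)
            (|r| + ((k : ℝ) + 1) * j * δ)
          linarith)
      · have := le_max_right (heatEvol δ (deltaMinus j δ φ k) r) (|r| + ((k : ℝ) + 1) * j * δ)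
        have harith : |r| + ((k : ℝ) + 2) * j * δ = (|r| + ((k : ℝ) + 1) * j * δ) + j * δ := by
          ring
        rw [harith]
        linarith

lemma doubling (hj : 0 < j) (hδ : 0 < δ) (hlip : LipschitzWith 1 φ)
    (hge : ∀ r, |r| ≤ φ r) :
    ∀ (k : ℕ) (r : ℝ),
      deltaMinus j δ φ k r ≤ deltaMinus j (δ/2) φ (2*k) r ∧
      deltaMinus j (δ/2) φ (2*k) r ≤ deltaPlus j δ φ k r := by
  have hδ' : 0 < δ / 2 := by linarith
  have hsum : δ / 2 + δ / 2 = δ := by ring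
  intro k
  induction k with
  | zero =>
      intro r
      constructor
      · simp [deltaMinus]
      · simpa [deltaMinus, deltaPlus] using le_max_left (φ r) (|r| + j * δ)
  | succ k ih =>
      have h2k : 2 * (k + 1) = (2 * k + 1) + 1 := by ring
      intro r
      have dm'_lip : ∀ n, LipschitzWith 1 (deltaMinus j (δ/2) φ n) := dm_lip hδ' hlip
      have dmlip : ∀ n, LipschitzWith 1 (deltaMinus j δ φ n) := dm_lip hδ hlip
      have dplip : ∀ n, LipschitzWith 1 (deltaPlus j δ φ n) := dp_lip hδ hlip
      -- coefficient arithmetic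
      have hco1 : (((2 * k + 1 : ℕ) : ℝ) + 1) * j * (δ / 2) = ((k : ℝ) + 1) * j * δ := by
        push_cast; ring
      have hco2 : (((2 * k : ℕ) : ℝ) + 1) * j * (δ / 2) ≤ ((k : ℝ) + 1) * j * δ := by
        push_cast; nlinarith
      constructor
      · -- part (a)
        rw [h2k, dm_succ k r, dm_succ (2*k+1) r, hco1]
        refine max_le ?_ (le_max_right _ _)
        have step1 : ∀ x, heatEvol (δ/2) (deltaMinus j δ φ k) x
            ≤ heatEvol (δ/2) (deltaMinus j (δ/2) φ (2*k)) x :=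
          heat_mono hδ' (dmlip k) (dm'_lip (2*k)) (fun x => (ih x).1)
        have step2 : ∀ x, heatEvol (δ/2) (deltaMinus j (δ/2) φ (2*k)) x
            ≤ deltaMinus j (δ/2) φ (2*k+1) x := by
          intro x
          rw [dm_succ (2*k) x]
          exact le_max_left _ _
        calc heatEvol δ (deltaMinus j δ φ k) r
            = heatEvol (δ/2) (heatEvol (δ/2) (deltaMinus j δ φ k)) r := by
              rw [heat_semigroup hδ' hδ' (dmlip k) r, hsum]
          _ ≤ heatEvol (δ/2) (heatEvol (δ/2) (deltaMinus j (δ/2) φ (2*k))) r :=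
              heat_mono hδ' (heat_lip hδ' (dmlip k)) (heat_lip hδ' (dm'_lip (2*k))) step1 r
          _ ≤ heatEvol (δ/2) (deltaMinus j (δ/2) φ (2*k+1)) r :=
              heat_mono hδ' (heat_lip hδ' (dm'_lip (2*k))) (dm'_lip (2*k+1)) step2 r
          _ ≤ max (heatEvol (δ/2) (deltaMinus j (δ/2) φ (2*k+1)) r)
                (|r| + ((k : ℝ) + 1) * j * δ) := le_max_left _ _
      · -- part (b)
        rw [h2k, dm_succ (2*k+1) r, dp_succ k r, hco1]
        refine max_le ?_ ?_
        · -- heat part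
          have inner : ∀ x, deltaMinus j (δ/2) φ (2*k+1) x
              ≤ heatEvol (δ/2) (deltaPlus j δ φ k) x := by
            intro x
            rw [dm_succ (2*k) x]
            refine max_le ?_ ?_
            · exact heat_mono hδ' (dm'_lip (2*k)) (dplip k) (fun y => (ih y).2) x
            · have hcone : ∀ y, |y| + ((k : ℝ) + 1) * j * δ ≤ deltaPlus j δ φ k y :=
                fun y => dp_ge_cone k y
              have h1 : |x| + (((2*k : ℕ) : ℝ) + 1) * j * (δ/2)
                  ≤ |x| + ((k : ℝ) + 1) * j * δ := by linarith [hco2]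
              have h2 : |x| + ((k : ℝ) + 1) * j * δ
                  ≤ heatEvol (δ/2) (fun y => |y| + ((k : ℝ) + 1) * j * δ) x :=
                cone_le_heat hδ' _ x
              have h3 : heatEvol (δ/2) (fun y => |y| + ((k : ℝ) + 1) * j * δ) x
                  ≤ heatEvol (δ/2) (deltaPlus j δ φ k) x :=
                heat_mono hδ' (cone_lip _) (dplip k) hcone x
              linarith
          have := heat_mono hδ' (dm'_lip (2*k+1)) (heat_lip hδ' (dplip k)) inner r
          rw [heat_semigroup hδ' hδ' (dplip k) r, hsum] at this
          exact this.trans (le_max_left _ _)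
        · -- cone part
          have : ((k : ℝ) + 1) * j * δ ≤ ((k : ℝ) + 2) * j * δ := by nlinarith
          have h := le_max_right (heatEvol δ (deltaPlus j δ φ k) r)
            (|r| + ((k : ℝ) + 2) * j * δ)
          linarith

end Delta

/-- (Monotone approach to the limit interface.) With `δₙ = τ2^{-n}`, at every
dyadic time: the δₙ⁻ evolution is below the δₙ₊₁⁻ evolution, which is below the
δₙ⁺ evolution; consequently, at any fixed dyadic time `t = k·τ2^{-m}`, the lower
barriers converge uniformly as `n → ∞` to a 1-Lipschitz limit. -/
theorem delta_monotone_approach (j τ : ℝ) (hj : 0 < j) (hτ : 0 < τ)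
    (φ : ℝ → ℝ) (hlip : LipschitzWith 1 φ) (hge : ∀ r : ℝ, |r| ≤ φ r)
    (hcone : ∃ M : ℝ, ∀ r : ℝ, M ≤ |r| → φ r = |r|) :
    (∀ (n k : ℕ) (r : ℝ),
      deltaMinus j (τ / 2 ^ n) φ k r ≤ deltaMinus j (τ / 2 ^ (n + 1)) φ (2 * k) r ∧
      deltaMinus j (τ / 2 ^ (n + 1)) φ (2 * k) r ≤ deltaPlus j (τ / 2 ^ n) φ k r) ∧
    (∀ m k : ℕ, ∃ ψ : ℝ → ℝ, LipschitzWith 1 ψ ∧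
      TendstoUniformly (fun n : ℕ => deltaMinus j (τ / 2 ^ (m + n)) φ (k * 2 ^ n))
        ψ Filter.atTop) := by
  have hhalf : ∀ n : ℕ, τ / 2 ^ (n + 1) = (τ / 2 ^ n) / 2 := by
    intro n; rw [pow_succ]; ring
  have hδpos : ∀ n : ℕ, 0 < τ / 2 ^ n := fun n => by positivity
  have part1 : ∀ (n k : ℕ) (r : ℝ),
      deltaMinus j (τ / 2 ^ n) φ k r ≤ deltaMinus j (τ / 2 ^ (n + 1)) φ (2 * k) r ∧
      deltaMinus j (τ / 2 ^ (n + 1)) φ (2 * k) r ≤ deltaPlus j (τ / 2 ^ n) φ k r := by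
    intro n k r
    rw [hhalf n]
    exact doubling hj (hδpos n) hlip hge k r
  refine ⟨part1, ?_⟩
  intro m k
  set F : ℕ → ℝ → ℝ := fun n => deltaMinus j (τ / 2 ^ (m + n)) φ (k * 2 ^ n) with hF
  have hFlip : ∀ n, LipschitzWith 1 (F n) := fun n => dm_lip (hδpos (m + n)) hlip _
  have hpow : ∀ n : ℕ, k * 2 ^ (n + 1) = 2 * (k * 2 ^ n) := by
    intro n; rw [pow_succ]; ring
  have hstep_lo : ∀ n r, F n r ≤ F (n + 1) r := by
    intro n r
    have h := (part1 (m + n) (k * 2 ^ n) r).1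
    rw [hF]
    simp only []
    rw [show m + (n + 1) = (m + n) + 1 from by ring, hpow n]
    exact h
  have hstep_hi : ∀ n r, F (n + 1) r ≤ F n r + j * (τ / 2 ^ (m + n)) := by
    intro n r
    have h1 := (part1 (m + n) (k * 2 ^ n) r).2
    have h2 := dp_le_dm_add hj (hδpos (m + n)) hlip hge (k * 2 ^ n) r
    rw [hF]
    simp only []
    rw [show m + (n + 1) = (m + n) + 1 from by ring, hpow n]
    linarith
  have hmono : ∀ r, Monotone fun n => F n r := by
    intro r
    exact monotone_nat_of_le_succ fun n => hstep_lo n r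
  -- geometric tail bound
  have hgeom : ∀ (n p : ℕ) (r : ℝ),
      F (n + p) r ≤ F n r + 2 * j * (τ / 2 ^ (m + n)) * (1 - (1/2 : ℝ) ^ p) := by
    intro n p r
    induction p with
    | zero => simp
    | succ p ih =>
        have h2 : τ / 2 ^ (m + (n + p)) = (τ / 2 ^ (m + n)) * (1/2 : ℝ) ^ p := by
          rw [show m + (n + p) = (m + n) + p from by ring, pow_add]
          field_simp
          rw [← mul_pow]; norm_num
        have h1 : F (n + p + 1) r ≤ F (n + p) r + j * ((τ / 2 ^ (m + n)) * (1/2 : ℝ) ^ p) := by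
          rw [← h2]; exact hstep_hi (n + p) r
        rw [show n + (p + 1) = (n + p) + 1 from by ring,
          show ((1:ℝ)/2) ^ (p + 1) = (1/2 : ℝ) ^ p * (1/2) from pow_succ _ _]
        linarith
  have hCpos : ∀ n : ℕ, (0:ℝ) ≤ 2 * j * (τ / 2 ^ (m + n)) := by
    intro n; have := hδpos (m + n); positivity
  have hbdd : ∀ r, BddAbove (Set.range fun n => F n r) := by
    intro r
    refine ⟨F 0 r + 2 * j * (τ / 2 ^ (m + 0)), ?_⟩
    rintro x ⟨q, rfl⟩
    have := hgeom 0 q r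
    have hp : (0:ℝ) ≤ (1/2 : ℝ) ^ q := by positivity
    simp only [Nat.zero_add] at this
    nlinarith [hCpos 0]
  set ψ : ℝ → ℝ := fun r => ⨆ n, F n r with hψ
  have htend : ∀ r, Filter.Tendsto (fun n => F n r) Filter.atTop (nhds (ψ r)) := by
    intro r
    exact tendsto_atTop_ciSup (hmono r) (hbdd r)
  have hlo : ∀ n r, F n r ≤ ψ r := fun n r => le_ciSup (hbdd r) n
  have hhi : ∀ n r, ψ r ≤ F n r + 2 * j * (τ / 2 ^ (m + n)) := by
    intro n r
    refine ciSup_le fun q => ?_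
    rcases le_or_gt q n with h | h
    · have := hmono r h
      nlinarith [hCpos n]
    · obtain ⟨p, rfl⟩ : ∃ p, q = n + p := ⟨q - n, by omega⟩
      have := hgeom n p r
      have hp : (0:ℝ) ≤ (1/2 : ℝ) ^ p := by positivity
      nlinarith [hCpos n]
  refine ⟨ψ, ?_, ?_⟩
  · refine LipschitzWith.of_dist_le_mul fun r s => ?_
    have hd : Filter.Tendsto (fun n => dist (F n r) (F n s)) Filter.atTop
        (nhds (dist (ψ r) (ψ s))) := (htend r).dist (htend s)
    refine le_of_tendsto hd (Filter.Eventually.of_forall fun n => ?_)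
    exact (hFlip n).dist_le_mul r s
  · rw [Metric.tendstoUniformly_iff]
    intro ε hε
    have hc : Filter.Tendsto (fun n : ℕ => 2 * j * (τ / 2 ^ (m + n))) Filter.atTop (nhds 0) := by
      have h1 : Filter.Tendsto (fun n : ℕ => ((1:ℝ)/2) ^ n) Filter.atTop (nhds 0) :=
        tendsto_pow_atTop_nhds_zero_of_lt_one (by norm_num) (by norm_num)
      have h2 : ∀ n : ℕ, 2 * j * (τ / 2 ^ (m + n)) = (2 * j * τ / 2 ^ m) * ((1:ℝ)/2) ^ n := by
        intro n; rw [pow_add]; field_simp; rw [← mul_pow]; norm_num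
      simp only [h2]
      simpa using h1.const_mul (2 * j * τ / 2 ^ m)
    have hev : ∀ᶠ n in Filter.atTop, 2 * j * (τ / 2 ^ (m + n)) < ε :=
      hc.eventually_lt_const hε
    refine hev.mono fun n hn r => ?_
    rw [Real.dist_eq, abs_of_nonneg (by linarith [hlo n r])]
    have := hhi n r
    linarith
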